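/- Let X and Y be real normed vector spaces, let T : X → Y be a bounded linear operator, let E be a dense linear subspace of X, let M be an infinite-dimensional linear subspace of X, and let 0 < ε < 1 and c > 0. Then there exist an infinite-dimensional linear subspace L of E and an injective linear map A : L → M such that for every nonzero z ∈ L: (1 − ε)‖Az‖ ≤ ‖z‖ ≤ (1 + ε)‖Az‖ and | ‖Tz‖ − ‖T(Az)‖ | ≤ εc‖Az‖. -/

import Mathlib

universe u

lemma fd_of_ker {V W : Type u} [AddCommGroup V] [Module ℝ V] [AddCommGroup W] [Module ℝ W]
    [FiniteDimensional ℝ W] (g : V →ₗ[ℝ] W) (h : FiniteDimensional ℝ (LinearMap.ker g)) :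
    FiniteDimensional ℝ V := by
  have h1 := LinearMap.rank_range_add_rank_ker g
  have h2 : Module.rank ℝ (LinearMap.range g) < Cardinal.aleph0 := by
    have : FiniteDimensional ℝ (LinearMap.range g) := inferInstance
    exact Module.rank_lt_aleph0 ℝ _
  have h3 : Module.rank ℝ (LinearMap.ker g) < Cardinal.aleph0 := Module.rank_lt_aleph0 ℝ _
  have : Module.rank ℝ V < Cardinal.aleph0 := by
    rw [← h1]; exact Cardinal.add_lt_aleph0 h2 h3
  exact Module.rank_lt_aleph0_iff.mp this

lemma exists_dual_vanish {X : Type*} [NormedAddCommGroup X] [NormedSpace ℝ X]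
    (W : Submodule ℝ X) (hW : FiniteDimensional ℝ W) (x : X) (hx : x ∉ W) :
    ∃ f : X →L[ℝ] ℝ, f x = 1 ∧ ∀ w ∈ W, f w = 0 := by
  have hclosed : IsClosed (W : Set X) := W.closed_of_finiteDimensional
  obtain ⟨f, u, hfu, hux⟩ :=
    geometric_hahn_banach_closed_point (W.convex) hclosed hx
  have hu0 : 0 < u := by simpa using hfu 0 W.zero_mem
  have hvanish : ∀ w ∈ W, f w = 0 := by
    intro w hw
    by_contra h
    have := hfu (((u + 1) / f w) • w) (W.smul_mem _ hw)
    rw [map_smul] at this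
    simp only [smul_eq_mul] at this
    rw [div_mul_cancel₀ _ h] at this
    linarith
  have hfx : 0 < f x := lt_trans hu0 hux
  refine ⟨(f x)⁻¹ • f, ?_, ?_⟩
  · simp [inv_mul_cancel₀ (ne_of_gt hfx)]
  · intro w hw
    simp [hvanish w hw]

lemma exists_biorthogonal {X : Type u} [NormedAddCommGroup X] [NormedSpace ℝ X]
    (M : Submodule ℝ X) (hM : ¬ FiniteDimensional ℝ M) :
    ∃ (m : ℕ → X) (f : ℕ → X →L[ℝ] ℝ), (∀ k, m k ∈ M) ∧
      ∀ j k, f j (m k) = if j = k then 1 else 0 := by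
  have hstep : ∀ s : Finset (X × (X →L[ℝ] ℝ)),
      (∀ p ∈ s, p.1 ∈ M ∧ p.2 p.1 = 1) →
      ∃ q : X × (X →L[ℝ] ℝ), (q.1 ∈ M ∧ q.2 q.1 = 1) ∧
        ∀ p ∈ s, p.2 q.1 = 0 ∧ q.2 p.1 = 0 := by
    intro s _
    classical
    set W : Submodule ℝ X := Submodule.span ℝ (Prod.fst '' (s : Set (X × (X →L[ℝ] ℝ)))) with hWdef
    have hWfd : FiniteDimensional ℝ W :=
      FiniteDimensional.span_of_finite ℝ ((s.finite_toSet).image _)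
    -- find x ∈ M with all functionals vanishing and x ∉ W
    have hex : ∃ x, x ∈ M ∧ (∀ p ∈ s, p.2 x = 0) ∧ x ∉ W := by
      by_contra hcon
      push_neg at hcon
      set G : M →ₗ[ℝ] ({p // p ∈ s} → ℝ) :=
        LinearMap.pi (fun p => ((p : X × (X →L[ℝ] ℝ)).2 : X →ₗ[ℝ] ℝ).comp M.subtype) with hGdef
      have hker : ∀ x : LinearMap.ker G, ((x : M) : X) ∈ W := by
        rintro ⟨⟨x, hxM⟩, hxker⟩
        refine hcon x hxM (fun p hp => ?_)
        have := congrFun (LinearMap.mem_ker.mp hxker) ⟨p, hp⟩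
        simpa [hGdef] using this
      have hkerfd : FiniteDimensional ℝ (LinearMap.ker G) := by
        have hinj : Function.Injective
            (fun x : LinearMap.ker G => (⟨((x : M) : X), hker x⟩ : W)) := by
          intro a b hab
          ext
          simpa using congrArg (fun w : W => (w : X)) hab
        let J : LinearMap.ker G →ₗ[ℝ] W :=
          { toFun := fun x => ⟨((x : M) : X), hker x⟩
            map_add' := by intros; ext; simp
            map_smul' := by intros; ext; simp }
        exact FiniteDimensional.of_injective J hinj
      exact hM (fd_of_ker G hkerfd)
    obtain ⟨x, hxM, hxf, hxW⟩ := hex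
    obtain ⟨f, hfx, hfW⟩ := exists_dual_vanish W hWfd x hxW
    refine ⟨(x, f), ⟨hxM, hfx⟩, fun p hp => ⟨hxf p hp, ?_⟩⟩
    exact hfW p.1 (Submodule.subset_span ⟨p, hp, rfl⟩)
  obtain ⟨g, hP, hr⟩ := exists_seq_of_forall_finset_exists
    (fun p : X × (X →L[ℝ] ℝ) => p.1 ∈ M ∧ p.2 p.1 = 1)
    (fun p q => p.2 q.1 = 0 ∧ q.2 p.1 = 0) hstep
  refine ⟨fun k => (g k).1, fun k => (g k).2, fun k => (hP k).1, fun j k => ?_⟩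
  rcases lt_trichotomy j k with h | rfl | h
  · rw [if_neg (Nat.ne_of_lt h)]; exact (hr j k h).1
  · rw [if_pos rfl]; exact (hP j).2
  · rw [if_neg (Nat.ne_of_gt h)]; exact (hr k j h).2

lemma geom_finset_sum_le_one (s : Finset ℕ) : ∑ i ∈ s, ((1:ℝ)/2)^(i+1) ≤ 1 := by
  classical
  have hN : ∀ i ∈ s, i < s.sup id + 1 :=
    fun i hi => Nat.lt_succ_of_le (Finset.le_sup (f := id) hi)
  have hsub : s ⊆ Finset.range (s.sup id + 1) := fun i hi => Finset.mem_range.mpr (hN i hi)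
  have h1 : ∑ i ∈ s, ((1:ℝ)/2)^(i+1) ≤ ∑ i ∈ Finset.range (s.sup id + 1), ((1:ℝ)/2)^(i+1) :=
    Finset.sum_le_sum_of_subset_of_nonneg hsub (fun i _ _ => by positivity)
  have h2 : ∀ N : ℕ, ∑ i ∈ Finset.range N, ((1:ℝ)/2)^(i+1) = 1 - (1/2)^N := by
    intro N
    induction N with
    | zero => simp
    | succ n ih => rw [Finset.sum_range_succ, ih]; ring
  have h3 : (0:ℝ) ≤ (1/2)^(s.sup id + 1) := by positivity
  rw [h2] at h1
  linarith

/-- Let `T : X → Y` be a bounded linear operator, `E` a dense subspace of `X`, `M` an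
infinite-dimensional subspace of `X`, `0 < ε < 1` and `c > 0`.  Then there exist an
infinite-dimensional subspace `L` of `E` and an injective linear map `A : L → M` such
that every nonzero `z ∈ L` satisfies `(1 - ε) * ‖A z‖ ≤ ‖z‖ ≤ (1 + ε) * ‖A z‖` and
`|‖T z‖ - ‖T (A z)‖| ≤ ε * c * ‖A z‖`. -/
theorem exists_subspace_almost_isometry {X Y : Type*}
    [NormedAddCommGroup X] [NormedSpace ℝ X] [NormedAddCommGroup Y] [NormedSpace ℝ Y]
    (T : X →L[ℝ] Y) (E : Submodule ℝ X) (hE : Dense (E : Set X))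
    (M : Submodule ℝ X) (hM : ¬ FiniteDimensional ℝ M)
    (ε c : ℝ) (hε0 : 0 < ε) (hε1 : ε < 1) (hc : 0 < c) :
    ∃ L : Submodule ℝ X, L ≤ E ∧ ¬ FiniteDimensional ℝ L ∧
      ∃ A : L →ₗ[ℝ] M, Function.Injective A ∧
        ∀ z : L, z ≠ 0 →
          (1 - ε) * ‖(A z : X)‖ ≤ ‖(z : X)‖ ∧
          ‖(z : X)‖ ≤ (1 + ε) * ‖(A z : X)‖ ∧
          |‖T (z : X)‖ - ‖T (A z : X)‖| ≤ ε * c * ‖(A z : X)‖ := by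
  classical
  obtain ⟨m, f, hmM, hbi⟩ := exists_biorthogonal M hM
  -- linear independence of m
  have hli : LinearIndependent ℝ m := by
    rw [linearIndependent_iff']
    intro s g hsum i hi
    have h0 := congrArg (f i) hsum
    rw [map_sum, map_zero] at h0
    simp only [map_smul, smul_eq_mul, hbi] at h0
    rwa [Finset.sum_eq_single i (fun b _ hb => by simp [Ne.symm hb])
      (fun h => absurd hi h), if_pos rfl, mul_one] at h0
  -- the perturbation parameter
  set δ : ℝ := min ε (ε * c / (‖T‖ + 1)) with hδdef
  have hT1 : (0:ℝ) < ‖T‖ + 1 := by positivity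
  have hδ0 : 0 < δ := lt_min hε0 (by positivity)
  have hδε : δ ≤ ε := min_le_left _ _
  have hδT : ‖T‖ * δ ≤ ε * c := by
    have h1 : δ ≤ ε * c / (‖T‖ + 1) := min_le_right _ _
    have h2 : ‖T‖ * δ ≤ ‖T‖ * (ε * c / (‖T‖ + 1)) :=
      mul_le_mul_of_nonneg_left h1 (norm_nonneg T)
    have h3 : ‖T‖ * (ε * c / (‖T‖ + 1)) ≤ (‖T‖ + 1) * (ε * c / (‖T‖ + 1)) :=
      mul_le_mul_of_nonneg_right (by linarith) (by positivity)
    have h4 : (‖T‖ + 1) * (ε * c / (‖T‖ + 1)) = ε * c := by field_simp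
    linarith
  -- choose approximating vectors in E
  have hEdense : ∀ (x : X) (r : ℝ), 0 < r → ∃ y, y ∈ E ∧ ‖y - x‖ < r := by
    intro x r hr
    rcases Metric.dense_iff.mp hE x r hr with ⟨y, hy1, hy2⟩
    have := Metric.mem_ball.mp hy1
    rw [dist_eq_norm] at this
    exact ⟨y, hy2, this⟩
  set dk : ℕ → ℝ := fun k => δ * (1/2)^(k+1) / (‖f k‖ + 1) with hdkdef
  have hdk : ∀ k, 0 < dk k := fun k => by positivity
  choose e heE hed using fun k => hEdense (m k) (dk k) (hdk k)
  -- the span of the biorthogonal sequence and its basis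
  set M₀ : Submodule ℝ X := Submodule.span ℝ (Set.range m) with hM₀def
  set b : Module.Basis ℕ ℝ M₀ := Module.Basis.span hli with hbdef
  have hbapp : ∀ i, (b i : X) = m i := fun i => by rw [hbdef]; exact congrArg Subtype.val (Module.Basis.span_apply hli i)
  clear_value b
  set B : M₀ →ₗ[ℝ] X := b.constr ℝ e with hBdef
  -- coordinates are given by the functionals
  have hcoord : ∀ (k : ℕ) (x : M₀), b.repr x k = f k (x : X) := by
    intro k x
    have hmaps : b.coord k = ((f k : X →ₗ[ℝ] ℝ).comp (Submodule.subtype M₀)) := by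
      apply b.ext
      intro i
      rw [Module.Basis.coord_apply, Module.Basis.repr_self, Finsupp.single_apply]
      simp only [LinearMap.comp_apply, Submodule.subtype_apply, ContinuousLinearMap.coe_coe]
      rw [hbapp i, hbi k i]
      by_cases h : i = k
      · simp [h]
      · simp [h, Ne.symm h]
    have := congrArg (fun (g : M₀ →ₗ[ℝ] ℝ) => g x) hmaps
    simpa using this
  -- representation of elements of M₀
  have hxsum : ∀ x : M₀, (x : X) = (b.repr x).sum fun i cc => cc • m i := by
    intro x
    have h0 := congrArg (M₀.subtype) (b.linearCombination_repr x)
    rw [Finsupp.linearCombination_apply, map_finsuppSum] at h0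
    simp only [map_smul, Submodule.subtype_apply] at h0
    rw [← h0]
    apply Finsupp.sum_congr
    intro i _
    rw [hbapp i]
  have hBx : ∀ x : M₀, B x = (b.repr x).sum fun i cc => cc • e i := by
    intro x
    rw [hBdef, Module.Basis.constr_apply]
  clear_value B
  -- the key estimate
  have hkey : ∀ x : M₀, ‖B x - (x : X)‖ ≤ δ * ‖(x : X)‖ := by
    intro x
    set s := (b.repr x).support with hsdef
    have hdiff : B x - (x : X) = ∑ i ∈ s, (b.repr x i) • (e i - m i) := by
      rw [hBx x]
      conv_lhs => rw [hxsum x]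
      rw [Finsupp.sum, Finsupp.sum, ← Finset.sum_sub_distrib]
      exact Finset.sum_congr rfl (fun i _ => (smul_sub _ _ _).symm)
    rw [hdiff]
    have hterm : ∀ i ∈ s, ‖(b.repr x i) • (e i - m i)‖ ≤ δ * ‖(x : X)‖ * (1/2)^(i+1) := by
      intro i _
      rw [norm_smul, Real.norm_eq_abs, hcoord i x]
      have hF : (0:ℝ) < ‖f i‖ + 1 := by positivity
      have h1 : |f i (x : X)| ≤ ‖f i‖ * ‖(x : X)‖ := (f i).le_opNorm _
      have h2 : ‖e i - m i‖ ≤ dk i := le_of_lt (hed i)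
      have h3 : |f i (x : X)| * ‖e i - m i‖ ≤ (‖f i‖ * ‖(x : X)‖) * dk i :=
        mul_le_mul h1 h2 (norm_nonneg _) (by positivity)
      have h4 : (‖f i‖ * ‖(x : X)‖) * dk i =
          (‖f i‖ / (‖f i‖ + 1)) * (δ * ‖(x : X)‖ * (1/2)^(i+1)) := by
        rw [hdkdef]; field_simp
      have h5 : ‖f i‖ / (‖f i‖ + 1) ≤ 1 := by rw [div_le_one hF]; linarith
      have h6 : (0:ℝ) ≤ δ * ‖(x : X)‖ * (1/2)^(i+1) := by positivity
      nlinarith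
    calc ‖∑ i ∈ s, (b.repr x i) • (e i - m i)‖
        ≤ ∑ i ∈ s, ‖(b.repr x i) • (e i - m i)‖ := norm_sum_le _ _
      _ ≤ ∑ i ∈ s, δ * ‖(x : X)‖ * (1/2)^(i+1) := Finset.sum_le_sum hterm
      _ = δ * ‖(x : X)‖ * ∑ i ∈ s, ((1:ℝ)/2)^(i+1) := by rw [Finset.mul_sum]
      _ ≤ δ * ‖(x : X)‖ * 1 :=
          mul_le_mul_of_nonneg_left (geom_finset_sum_le_one s) (by positivity)
      _ = δ * ‖(x : X)‖ := mul_one _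
  -- B is injective
  have hBinj : Function.Injective B := by
    rw [← LinearMap.ker_eq_bot, LinearMap.ker_eq_bot']
    intro x hx
    have h0 := hkey x
    rw [hx, zero_sub, norm_neg] at h0
    have hδ1 : δ < 1 := lt_of_le_of_lt hδε hε1
    have : ‖(x : X)‖ = 0 := by nlinarith [norm_nonneg ((x : X))]
    have : (x : X) = 0 := norm_eq_zero.mp this
    exact Subtype.ext this
  set L : Submodule ℝ X := LinearMap.range B with hLdef
  have hLE : L ≤ E := by
    rintro _ ⟨x, rfl⟩
    rw [hBx x, Finsupp.sum]
    exact Submodule.sum_mem E fun i _ => E.smul_mem _ (heE i)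
  set eqv : M₀ ≃ₗ[ℝ] L := LinearEquiv.ofInjective B hBinj with heqvdef
  have heqvcoe : ∀ w : M₀, ((eqv w : L) : X) = B w := fun w => rfl
  have hLfd : ¬ FiniteDimensional ℝ L := by
    intro hfd
    have hM₀fd : FiniteDimensional ℝ M₀ := eqv.symm.finiteDimensional
    haveI := hM₀fd
    haveI := FiniteDimensional.fintypeBasisIndex b
    exact not_finite ℕ
  have hM₀M : M₀ ≤ M := Submodule.span_le.mpr (by rintro _ ⟨k, rfl⟩; exact hmM k)
  clear_value eqv
  set A : L →ₗ[ℝ] M := (Submodule.inclusion hM₀M).comp eqv.symm.toLinearMap with hAdef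
  have hAcoe : ∀ w : L, ((A w : M) : X) = ((eqv.symm w : M₀) : X) := fun w => rfl
  have hAinj : Function.Injective A := by
    intro a b' hab
    rw [hAdef] at hab
    simp only [LinearMap.comp_apply, LinearEquiv.coe_toLinearMap] at hab
    exact eqv.symm.injective (Submodule.inclusion_injective hM₀M hab)
  clear_value A
  refine ⟨L, hLE, hLfd, A, hAinj, ?_⟩
  intro z _
  set x : M₀ := eqv.symm z with hxdef
  have hzx : (z : X) = B x := by
    rw [hxdef, ← heqvcoe (eqv.symm z), eqv.apply_symm_apply]
  have hAz : ((A z : M) : X) = (x : X) := hAcoe z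
  clear_value x
  have hk := hkey x
  have habs := abs_norm_sub_norm_le (B x) ((x : X))
  have habs' := abs_le.mp (le_trans habs hk)
  have hδεn : δ * ‖(x : X)‖ ≤ ε * ‖(x : X)‖ :=
    mul_le_mul_of_nonneg_right hδε (norm_nonneg _)
  refine ⟨?_, ?_, ?_⟩
  · rw [hAz, hzx]
    have h0 := norm_nonneg ((x : X))
    linarith
  · rw [hAz, hzx]
    have h0 := norm_nonneg ((x : X))
    linarith
  · rw [hAz, hzx]
    have h1 : |‖T (B x)‖ - ‖T ((x : X))‖| ≤ ‖T (B x) - T ((x : X))‖ :=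
      abs_norm_sub_norm_le _ _
    have h2 : T (B x) - T ((x : X)) = T (B x - (x : X)) := (map_sub T _ _).symm
    have h3 : ‖T (B x - (x : X))‖ ≤ ‖T‖ * ‖B x - (x : X)‖ := T.le_opNorm _
    have h4 : ‖T‖ * ‖B x - (x : X)‖ ≤ ‖T‖ * (δ * ‖(x : X)‖) :=
      mul_le_mul_of_nonneg_left hk (norm_nonneg T)
    have h5 : ‖T‖ * (δ * ‖(x : X)‖) ≤ ε * c * ‖(x : X)‖ := by
      have h6 := mul_le_mul_of_nonneg_right hδT (norm_nonneg ((x : X)))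
      calc ‖T‖ * (δ * ‖(x : X)‖) = (‖T‖ * δ) * ‖(x : X)‖ := by ring
        _ ≤ ε * c * ‖(x : X)‖ := h6
    rw [h2] at h1
    linarith
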